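/- arXiv:1810.07933 — 4 statements merged into one kernel-verified Lean document; each statement's English description precedes it below -/
import Mathlib

section
/- Let H be a Hilbert space, A : H → H a bounded self-adjoint operator, and W, V closed subspaces of H. Assume (1) there is ε₁ > 0 with (Ax, x) < -ε₁‖x‖² for all nonzero x ∈ W, (2) (Ax, x) > 0 for all nonzero x in the orthogonal complement V⊥, and (3) (Ax, y) = 0 for all x ∈ V, y ∈ V⊥. Then the restriction of the orthogonal projection P_V onto V to the subspace W is injective, and the image P_V(W) is a closed subspace of H. -/
open RealInnerProductSpace

theorem stmt_0 {H : Type*} [NormedAddCommGroup H] [InnerProductSpace ℝ H] [CompleteSpace H]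
    (A : H →L[ℝ] H) (hA : ∀ x y : H, ⟪A x, y⟫ = ⟪x, A y⟫)
    (W V : Submodule ℝ H) (hWclosed : IsClosed (W : Set H)) [CompleteSpace V]
    (ε₁ : ℝ) (hε₁ : 0 < ε₁)
    (h1 : ∀ x ∈ W, x ≠ 0 → ⟪A x, x⟫ < -ε₁ * ‖x‖ ^ 2)
    (h2 : ∀ x ∈ Vᗮ, x ≠ 0 → 0 < ⟪A x, x⟫)
    (h3 : ∀ x ∈ V, ∀ y ∈ Vᗮ, ⟪A x, y⟫ = 0) :
    Set.InjOn (fun x : H => (V.orthogonalProjectionOnto x : H)) (W : Set H) ∧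
    IsClosed ((fun x : H => (V.orthogonalProjectionOnto x : H)) '' (W : Set H)) := by
  set P : H → H := fun x : H => (V.orthogonalProjectionOnto x : H) with hP
  -- key estimate
  have key : ∀ x ∈ W, ε₁ * ‖x‖ ^ 2 ≤ ‖A‖ * ‖P x‖ ^ 2 := by
    intro x hx
    by_cases hx0 : x = 0
    · simp [hx0, hP]
    set p : H := P x with hpdef
    have hpV : p ∈ V := (V.orthogonalProjectionOnto x).2
    have hq : x - p ∈ Vᗮ := Submodule.sub_starProjection_mem_orthogonal (K := V) x
    have hApq : ⟪A p, x - p⟫ = 0 := h3 p hpV _ hq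
    have hAqp : ⟪A (x - p), p⟫ = 0 := by
      rw [hA, real_inner_comm]; exact hApq
    have hdecomp : ⟪A x, x⟫ = ⟪A p, p⟫ + ⟪A (x - p), x - p⟫ := by
      have hx' : x = p + (x - p) := by abel
      calc ⟪A x, x⟫ = ⟪A (p + (x - p)), p + (x - p)⟫ := by rw [← hx']
        _ = ⟪A p, p⟫ + ⟪A p, x - p⟫ + (⟪A (x - p), p⟫ + ⟪A (x - p), x - p⟫) := by
            rw [map_add, inner_add_left, inner_add_right, inner_add_right]
        _ = ⟪A p, p⟫ + ⟪A (x - p), x - p⟫ := by rw [hApq, hAqp]; ring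
    have hq_nonneg : 0 ≤ ⟪A (x - p), x - p⟫ := by
      rcases eq_or_ne (x - p) 0 with h | h
      · simp [h]
      · exact (h2 _ hq h).le
    have h1x := h1 x hx hx0
    have habs : |⟪A p, p⟫| ≤ ‖A p‖ * ‖p‖ := abs_real_inner_le_norm (A p) p
    have hop : ‖A p‖ ≤ ‖A‖ * ‖p‖ := A.le_opNorm p
    have hpn : (0:ℝ) ≤ ‖p‖ := norm_nonneg p
    have := abs_le.mp habs
    nlinarith [this.1, this.2]
  have hCnn : (0:ℝ) ≤ Real.sqrt (‖A‖ / ε₁) := Real.sqrt_nonneg _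
  have hlip : ∀ x ∈ W, ∀ y ∈ W, ‖x - y‖ ≤ Real.sqrt (‖A‖ / ε₁) * ‖P x - P y‖ := by
    intro x hx y hy
    have hsub : x - y ∈ W := W.sub_mem hx hy
    have hPsub : P (x - y) = P x - P y := by
      simp [hP, map_sub]
    have hk := key (x - y) hsub
    rw [hPsub] at hk
    have h2' : ‖x - y‖ ^ 2 ≤ (‖A‖ / ε₁) * ‖P x - P y‖ ^ 2 := by
      rw [div_mul_eq_mul_div, le_div_iff₀ hε₁]
      nlinarith
    have : ‖x - y‖ ≤ Real.sqrt ((‖A‖ / ε₁) * ‖P x - P y‖ ^ 2) := by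
      rw [show Real.sqrt ((‖A‖ / ε₁) * ‖P x - P y‖ ^ 2)
          = Real.sqrt ((‖A‖ / ε₁) * ‖P x - P y‖ ^ 2) from rfl]
      have := Real.sqrt_le_sqrt h2'
      calc ‖x - y‖ = Real.sqrt (‖x - y‖ ^ 2) := by
            rw [Real.sqrt_sq (norm_nonneg _)]
        _ ≤ _ := this
    calc ‖x - y‖ ≤ Real.sqrt ((‖A‖ / ε₁) * ‖P x - P y‖ ^ 2) := this
      _ = Real.sqrt (‖A‖ / ε₁) * ‖P x - P y‖ := by
          rw [Real.sqrt_mul (by positivity), Real.sqrt_sq (norm_nonneg _)]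
  have hinj : Set.InjOn P (W : Set H) := by
    intro x hx y hy hxy
    have hsub : x - y ∈ W := W.sub_mem hx hy
    have hk := key (x - y) hsub
    have hPsub : P (x - y) = P x - P y := by simp [hP, map_sub]
    rw [hPsub, hxy, sub_self] at hk
    simp only [norm_zero] at hk
    have : ‖x - y‖ ^ 2 ≤ 0 := by nlinarith
    have : ‖x - y‖ = 0 := by nlinarith [norm_nonneg (x - y), sq_nonneg ‖x - y‖]
    have := norm_eq_zero.mp this
    exact sub_eq_zero.mp this
  refine ⟨hinj, ?_⟩
  apply IsSeqClosed.isClosed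
  intro u y hu huy
  choose v hvW hvu using hu
  set C := Real.sqrt (‖A‖ / ε₁) with hC
  have hucau : CauchySeq u := huy.cauchySeq
  have hvcau : CauchySeq v := by
    rw [Metric.cauchySeq_iff] at hucau ⊢
    intro ε hε
    obtain ⟨N, hN⟩ := hucau (ε / (C + 1)) (by positivity)
    refine ⟨N, fun m hm n hn => ?_⟩
    have h1' := hN m hm n hn
    have h2' : ‖v m - v n‖ ≤ C * ‖u m - u n‖ := by
      have := hlip (v m) (hvW m) (v n) (hvW n)
      rwa [hvu m, hvu n] at this
    have hd : dist (v m) (v n) = ‖v m - v n‖ := dist_eq_norm _ _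
    have hd' : dist (u m) (u n) = ‖u m - u n‖ := dist_eq_norm _ _
    rw [hd]
    rw [hd'] at h1'
    have hnn : (0:ℝ) ≤ ‖u m - u n‖ := norm_nonneg _
    have hC1 : (0:ℝ) < C + 1 := by positivity
    calc ‖v m - v n‖ ≤ C * ‖u m - u n‖ := h2'
      _ < ε := by
          rw [lt_div_iff₀ hC1] at h1'
          nlinarith
  obtain ⟨x, hxlim⟩ := cauchySeq_tendsto_of_complete hvcau
  have hxW : x ∈ W := hWclosed.mem_of_tendsto hxlim (Filter.Eventually.of_forall hvW)
  refine ⟨x, hxW, ?_⟩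
  have hcont : Continuous P := by
    exact (continuous_subtype_val.comp (V.orthogonalProjectionOnto).continuous)
  have : Filter.Tendsto (fun n => P (v n)) Filter.atTop (nhds (P x)) :=
    (hcont.tendsto x).comp hxlim
  simp only [hvu] at this
  exact tendsto_nhds_unique this huy
end

section
/- Let H be a Hilbert space, A : H → H a bounded self-adjoint operator, W, V closed subspaces of H, satisfying: (1) there is ε₁ > 0 with (Ax,x) < -ε₁‖x‖² for all nonzero x ∈ W; (2) (Ax,x) > 0 for all nonzero x ∈ V⊥; (3) (Ax,y) = 0 for all x ∈ V, y ∈ V⊥; (4) (Ax,x) ≤ 0 for all x ∈ V. Suppose further there is a closed subspace U of W⊥ such that W⊥/U is finite dimensional and (Ax,x) > 0 for all nonzero x ∈ U. Then P_V : W → V and P_W : V → W are both Fredholm operators and ind(P_W : V → W) = -ind(P_V : W → V). -/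
open RealInnerProductSpace

/-- A bounded operator is Fredholm if its kernel is finite dimensional and its range is
closed with finite dimensional cokernel. -/
def IsFredholm {X Y : Type*} [NormedAddCommGroup X] [NormedAddCommGroup Y]
    [NormedSpace ℝ X] [NormedSpace ℝ Y] (T : X →L[ℝ] Y) : Prop :=
  FiniteDimensional ℝ (LinearMap.ker (T : X →ₗ[ℝ] Y)) ∧ IsClosed ((LinearMap.range (T : X →ₗ[ℝ] Y) : Submodule ℝ Y) : Set Y) ∧
    FiniteDimensional ℝ (Y ⧸ LinearMap.range (T : X →ₗ[ℝ] Y))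

/-- The Fredholm index: dim ker minus dim coker. -/
noncomputable def fredholmIndex {X Y : Type*} [NormedAddCommGroup X] [NormedAddCommGroup Y]
    [NormedSpace ℝ X] [NormedSpace ℝ Y] (T : X →L[ℝ] Y) : ℤ :=
  (Module.finrank ℝ (LinearMap.ker (T : X →ₗ[ℝ] Y)) : ℤ) - (Module.finrank ℝ (Y ⧸ LinearMap.range (T : X →ₗ[ℝ] Y)) : ℤ)

/-- The orthogonal projection of `H` onto `Y`, restricted to `X`. -/
noncomputable def projB {H : Type*} [NormedAddCommGroup H] [InnerProductSpace ℝ H]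
    [CompleteSpace H] (X Y : Submodule ℝ H) [CompleteSpace Y] : X →L[ℝ] Y :=
  (Y.orthogonalProjectionOnto).comp X.subtypeL

set_option maxHeartbeats 1000000 in
theorem stmt_1 {H : Type*} [NormedAddCommGroup H] [InnerProductSpace ℝ H] [CompleteSpace H]
    (A : H →L[ℝ] H) (hA : ∀ x y : H, ⟪A x, y⟫ = ⟪x, A y⟫)
    (W V U : Submodule ℝ H) [CompleteSpace W] [CompleteSpace V]
    (hUclosed : IsClosed (U : Set H)) (hUW : U ≤ Wᗮ)
    (hquot : FiniteDimensional ℝ (↥Wᗮ ⧸ U.comap Wᗮ.subtype))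
    (ε₁ : ℝ) (hε₁ : 0 < ε₁)
    (h1 : ∀ x ∈ W, x ≠ 0 → ⟪A x, x⟫ < -ε₁ * ‖x‖ ^ 2)
    (h2 : ∀ x ∈ Vᗮ, x ≠ 0 → 0 < ⟪A x, x⟫)
    (h3 : ∀ x ∈ V, ∀ y ∈ Vᗮ, ⟪A x, y⟫ = 0)
    (h4 : ∀ x ∈ V, ⟪A x, x⟫ ≤ 0)
    (h6 : ∀ x ∈ U, x ≠ 0 → 0 < ⟪A x, x⟫) :
    IsFredholm (projB W V) ∧ IsFredholm (projB V W) ∧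
      fredholmIndex (projB V W) = -fredholmIndex (projB W V) := by
  -- The key quadratic-form estimate: S is bounded below.
  have key : ∀ x : W, ε₁ * ‖(x:H)‖^2 ≤ (‖A‖ + 1) * ‖((projB W V) x : H)‖^2 := by
    intro x
    rcases eq_or_ne (x : H) 0 with hx | hx
    · have hz : (projB W V) x = 0 := by
        show V.orthogonalProjectionOnto (x : H) = 0
        rw [hx]; simp
      rw [hz, hx]; simp
    · set v : H := (V.orthogonalProjectionOnto (x:H) : H) with hv
      set v' : H := (Vᗮ.orthogonalProjectionOnto (x:H) : H) with hv'
      have hvv : v + v' = (x:H) := V.starProjection_add_starProjection_orthogonal x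
      have hcross : ⟪A v, v'⟫ = 0 := h3 v (Submodule.coe_mem _) v' (Submodule.coe_mem _)
      have hcross' : ⟪A v', v⟫ = 0 := by rw [hA, real_inner_comm]; exact hcross
      have hdecomp : ⟪A (x:H), (x:H)⟫ = ⟪A v, v⟫ + ⟪A v', v'⟫ := by
        rw [← hvv]
        simp only [map_add, inner_add_left, inner_add_right, hcross, hcross']
        ring
      have hv'0 : 0 ≤ ⟪A v', v'⟫ := by
        rcases eq_or_ne v' 0 with h | h
        · simp [h]
        · exact (h2 v' (Submodule.coe_mem _) h).le
      have h1x := h1 (x:H) x.2 hx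
      have habs : |⟪A v, v⟫| ≤ ‖A v‖ * ‖v‖ := abs_real_inner_le_norm _ _
      have hop : ‖A v‖ ≤ ‖A‖ * ‖v‖ := A.le_opNorm v
      have hproj : (projB W V) x = V.orthogonalProjectionOnto (x : H) := rfl
      rw [hproj]
      have hnv : ‖(V.orthogonalProjectionOnto (x:H) : H)‖ = ‖v‖ := rfl
      rw [hnv]
      nlinarith [norm_nonneg v, norm_nonneg (A v), abs_le.mp habs, norm_nonneg (x:H)]
  -- hence an explicit antilipschitz bound
  have hbound : ∀ x : W, ‖x‖ ≤ Real.sqrt ((‖A‖ + 1)/ε₁) * ‖(projB W V) x‖ := by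
    intro x
    have hk := key x
    have hx2 : ‖x‖^2 ≤ ((‖A‖ + 1)/ε₁) * ‖(projB W V) x‖^2 := by
      have hxn : ‖x‖ = ‖(x:H)‖ := rfl
      have hsn : ‖(projB W V) x‖ = ‖((projB W V) x : H)‖ := rfl
      rw [hxn, hsn, div_mul_eq_mul_div, le_div_iff₀ hε₁]
      nlinarith [hk]
    calc ‖x‖ = Real.sqrt (‖x‖^2) := (Real.sqrt_sq (norm_nonneg x)).symm
      _ ≤ Real.sqrt (((‖A‖ + 1)/ε₁) * ‖(projB W V) x‖^2) := Real.sqrt_le_sqrt hx2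
      _ = Real.sqrt ((‖A‖ + 1)/ε₁) * ‖(projB W V) x‖ := by
          rw [Real.sqrt_mul (by positivity), Real.sqrt_sq (norm_nonneg _)]
  have hK : AntilipschitzWith ⟨Real.sqrt ((‖A‖ + 1)/ε₁), Real.sqrt_nonneg _⟩ (projB W V) :=
    ContinuousLinearMap.antilipschitz_of_bound _ hbound
  have hkerS : LinearMap.ker (projB W V : W →ₗ[ℝ] V) = ⊥ := LinearMap.ker_eq_bot.mpr hK.injective
  have hclosedS : IsClosed ((LinearMap.range (projB W V : W →ₗ[ℝ] V) : Submodule ℝ V) : Set V) := by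
    have := hK.isClosed_range (projB W V).uniformContinuous
    rwa [LinearMap.coe_range]
  -- surjectivity of (projB V W) via Riesz representation
  have hTrange : LinearMap.range (projB V W : V →ₗ[ℝ] W) = ⊤ := by
    set R : Submodule ℝ V := LinearMap.range (projB W V : W →ₗ[ℝ] V) with hR
    haveI : CompleteSpace R := hclosedS.completeSpace_coe
    set S' : W →L[ℝ] R := (projB W V).codRestrict R (fun x => LinearMap.mem_range_self _ x) with hS'
    have hker' : LinearMap.ker (S' : W →ₗ[ℝ] R) = ⊥ := by
      rw [ContinuousLinearMap.ker_codRestrict, hkerS]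
    have hrange' : LinearMap.range (S' : W →ₗ[ℝ] R) = ⊤ := by
      rw [Submodule.eq_top_iff']
      rintro ⟨v, w, rfl⟩
      exact ⟨w, rfl⟩
    set e := ContinuousLinearEquiv.ofBijective S' hker' hrange' with he
    rw [LinearMap.range_eq_top]
    intro w
    set g : R →L[ℝ] ℝ := (innerSL ℝ w).comp (e.symm : R →L[ℝ] W) with hg
    set v₀ : R := (InnerProductSpace.toDual ℝ R).symm g with hv₀
    refine ⟨((v₀ : V)), ?_⟩
    have keyw : ∀ w' : W, ⟪((v₀ : V) : H), (w' : H)⟫ = ⟪(w : H), (w' : H)⟫ := by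
      intro w'
      have step1 : ⟪(v₀ : V), V.orthogonalProjectionOnto (w' : H)⟫ = ⟪((v₀ : V) : H), (w' : H)⟫ :=
        Submodule.inner_orthogonalProjectionOnto_eq_of_mem_left (v₀ : V) (w' : H)
      have step2 : ⟪(v₀ : V), V.orthogonalProjectionOnto (w' : H)⟫ = ⟪v₀, S' w'⟫ := rfl
      have step3 : ⟪v₀, S' w'⟫ = g (S' w') := InnerProductSpace.toDual_symm_apply
      have step4 : g (S' w') = ⟪w, e.symm (S' w')⟫ := rfl
      have step5 : e.symm (S' w') = w' := e.symm_apply_apply w'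
      rw [← step1, step2, step3, step4, step5]
      exact (Submodule.coe_inner W w w')
    show W.orthogonalProjectionOnto ((v₀ : V) : H) = w
    have hdiff : ((v₀ : V) : H) - (w : H) ∈ Wᗮ := by
      rw [Submodule.mem_orthogonal]
      intro u hu
      rw [inner_sub_right, sub_eq_zero]
      calc ⟪u, ((v₀ : V) : H)⟫ = ⟪((v₀ : V) : H), u⟫ := real_inner_comm _ _
        _ = ⟪(w : H), u⟫ := keyw ⟨u, hu⟩
        _ = ⟪u, (w : H)⟫ := real_inner_comm _ _
    have hsplit : ((v₀ : V) : H) = (((v₀ : V) : H) - (w : H)) + (w : H) := by abel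
    rw [hsplit, map_add, Submodule.orthogonalProjectionOnto_apply_of_mem_orthogonal hdiff,
      Submodule.orthogonalProjectionOnto_mem_subspace_eq_self, zero_add]
  -- kernel of (projB V W)
  have hkerT : ∀ v : V, (projB V W) v = 0 ↔ (v : H) ∈ Wᗮ := by
    intro v
    show W.orthogonalProjectionOnto (v : H) = 0 ↔ _
    exact Submodule.orthogonalProjectionOnto_eq_zero_iff
  -- ker (projB V W) is finite dimensional
  haveI fdKerT : FiniteDimensional ℝ (LinearMap.ker (projB V W : V →ₗ[ℝ] W)) := by
    have hmem : ∀ x : LinearMap.ker (projB V W : V →ₗ[ℝ] W), ((x : V) : H) ∈ Wᗮ := by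
      intro x
      exact (hkerT x.1).mp (LinearMap.mem_ker.mp x.2)
    set f₁ : LinearMap.ker (projB V W : V →ₗ[ℝ] W) →ₗ[ℝ] Wᗮ :=
      LinearMap.codRestrict Wᗮ (V.subtype ∘ₗ (LinearMap.ker (projB V W : V →ₗ[ℝ] W)).subtype) hmem with hf₁
    set φ : LinearMap.ker (projB V W : V →ₗ[ℝ] W) →ₗ[ℝ] (↥Wᗮ ⧸ U.comap Wᗮ.subtype) :=
      (U.comap Wᗮ.subtype).mkQ ∘ₗ f₁ with hφ
    have hφinj : Function.Injective φ := by
      rw [← LinearMap.ker_eq_bot, LinearMap.ker_eq_bot']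
      intro x hx
      have hU : ((x : V) : H) ∈ U := by
        have hm : f₁ x ∈ U.comap Wᗮ.subtype := by
          rw [← Submodule.Quotient.mk_eq_zero]
          exact hx
        exact hm
      have hx0 : ((x : V) : H) = 0 := by
        by_contra hne
        exact absurd (h4 _ (x.1.2)) (not_le.mpr (h6 _ hU hne))
      ext
      exact hx0
    exact FiniteDimensional.of_injective φ hφinj
  -- the orthogonal complement of range (projB W V) equals ker (projB V W)
  have hRperp : (LinearMap.range (projB W V : W →ₗ[ℝ] V))ᗮ = LinearMap.ker (projB V W : V →ₗ[ℝ] W) := by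
    ext v
    rw [Submodule.mem_orthogonal, LinearMap.mem_ker]
    constructor
    · intro h
      show W.orthogonalProjectionOnto (v : H) = 0
      rw [Submodule.orthogonalProjectionOnto_eq_zero_iff, Submodule.mem_orthogonal]
      intro u hu
      have := h ((projB W V) ⟨u, hu⟩) (LinearMap.mem_range_self _ _)
      rwa [show (⟪(projB W V) ⟨u, hu⟩, v⟫ : ℝ) = ⟪((⟨u, hu⟩ : W) : H), (v : H)⟫ from
        Submodule.inner_orthogonalProjectionOnto_eq_of_mem_right v u] at this
    · intro h
      have hv : (v : H) ∈ Wᗮ := (hkerT v).mp h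
      rintro _ ⟨w', rfl⟩
      rw [show (⟪(projB W V : W →ₗ[ℝ] V) w', v⟫ : ℝ) = ⟪(w' : H), (v : H)⟫ from
        Submodule.inner_orthogonalProjectionOnto_eq_of_mem_right v w']
      exact (Submodule.mem_orthogonal W (v : H)).mp hv (w' : H) w'.2
  -- cokernel of (projB W V)
  haveI : CompleteSpace (LinearMap.range (projB W V : W →ₗ[ℝ] V)) := hclosedS.completeSpace_coe
  have hcompl : IsCompl (LinearMap.range (projB W V : W →ₗ[ℝ] V)) (LinearMap.range (projB W V : W →ₗ[ℝ] V))ᗮ :=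
    Submodule.isCompl_orthogonal_of_hasOrthogonalProjection
  have q : (V ⧸ LinearMap.range (projB W V : W →ₗ[ℝ] V)) ≃ₗ[ℝ] (LinearMap.range (projB W V : W →ₗ[ℝ] V))ᗮ :=
    Submodule.quotientEquivOfIsCompl _ _ hcompl
  haveI fdPerp : FiniteDimensional ℝ ((LinearMap.range (projB W V : W →ₗ[ℝ] V))ᗮ : Submodule ℝ V) := by
    rw [hRperp]; exact fdKerT
  haveI fdCokerS : FiniteDimensional ℝ (V ⧸ LinearMap.range (projB W V : W →ₗ[ℝ] V)) :=
    Module.Finite.equiv q.symm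
  have hfr : Module.finrank ℝ (V ⧸ LinearMap.range (projB W V : W →ₗ[ℝ] V)) = Module.finrank ℝ (LinearMap.ker (projB V W : V →ₗ[ℝ] W)) := by
    rw [q.finrank_eq, hRperp]
  -- assemble
  refine ⟨⟨?_, hclosedS, fdCokerS⟩, ⟨fdKerT, ?_, ?_⟩, ?_⟩
  · rw [hkerS]
    infer_instance
  · rw [hTrange]
    simp only [Submodule.top_coe]
    exact isClosed_univ
  · rw [hTrange]
    exact Module.Finite.of_finite
  · unfold fredholmIndex
    have hk : Module.finrank ℝ (LinearMap.ker (projB W V : W →ₗ[ℝ] V)) = 0 := by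
      rw [hkerS]; exact finrank_bot ℝ W
    have hc : Module.finrank ℝ (W ⧸ LinearMap.range (projB V W : V →ₗ[ℝ] W)) = 0 := by
      rw [hTrange]
      exact Module.finrank_zero_of_subsingleton
    rw [hk, hc, hfr]
    ring
end

section
/- Let H be a Hilbert space, A a bounded self-adjoint operator on H, W a closed subspace with (Ax,x) < -ε₁‖x‖² for all nonzero x ∈ W (ε₁ > 0), and V a closed subspace with (Ax,x) > 0 for all nonzero x ∈ V⊥ and (Ax,y) = 0 for all x ∈ V, y ∈ V⊥. Then ‖P_V x‖ ≥ √(ε₁/‖A‖) ‖x‖ for all x ∈ W. -/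
open RealInnerProductSpace

theorem stmt_2 {H : Type*} [NormedAddCommGroup H] [InnerProductSpace ℝ H] [CompleteSpace H]
    (A : H →L[ℝ] H) (hA : ∀ x y : H, ⟪A x, y⟫ = ⟪x, A y⟫) (hAne : A ≠ 0)
    (W V : Submodule ℝ H) (hWclosed : IsClosed (W : Set H)) [CompleteSpace V]
    (ε₁ : ℝ) (hε₁ : 0 < ε₁)
    (h1 : ∀ x ∈ W, x ≠ 0 → ⟪A x, x⟫ < -ε₁ * ‖x‖ ^ 2)
    (h2 : ∀ x ∈ Vᗮ, x ≠ 0 → 0 < ⟪A x, x⟫)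
    (h3 : ∀ x ∈ V, ∀ y ∈ Vᗮ, ⟪A x, y⟫ = 0) :
    ∀ x ∈ W, Real.sqrt (ε₁ / ‖A‖) * ‖x‖ ≤ ‖(V.orthogonalProjectionOnto x : H)‖ := by
  intro x hxW
  by_cases hx0 : x = 0
  · simp [hx0]
  have hAnorm : (0 : ℝ) < ‖A‖ := by
    simpa using (norm_pos_iff.mpr hAne)
  set v : H := (V.orthogonalProjectionOnto x : H) with hv
  set w : H := x - v with hw
  have hvV : v ∈ V := (V.orthogonalProjectionOnto x).2
  have hwVp : w ∈ Vᗮ := V.sub_starProjection_mem_orthogonal x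
  have hxvw : x = v + w := by simp [hw]
  -- cross terms vanish
  have hvw : ⟪A v, w⟫ = 0 := h3 v hvV w hwVp
  have hwv : ⟪A w, v⟫ = 0 := by
    rw [hA w v, real_inner_comm]
    exact hvw
  -- quadratic form splits
  have hsplit : ⟪A x, x⟫ = ⟪A v, v⟫ + ⟪A w, w⟫ := by
    rw [hxvw]
    simp only [map_add, inner_add_add_self, inner_add_left, inner_add_right]
    rw [hvw, hwv]
    ring
  have hww : 0 ≤ ⟪A w, w⟫ := by
    by_cases hw0 : w = 0
    · simp [hw0]
    · exact le_of_lt (h2 w hwVp hw0)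
  have hAx : ⟪A x, x⟫ < -ε₁ * ‖x‖ ^ 2 := h1 x hxW hx0
  have hvv : ⟪A v, v⟫ < -ε₁ * ‖x‖ ^ 2 := by
    nlinarith [hsplit]
  -- bound below
  have hlow : -(‖A‖ * ‖v‖ ^ 2) ≤ ⟪A v, v⟫ := by
    have h1' := abs_real_inner_le_norm (A v) v
    have h2' : ‖A v‖ ≤ ‖A‖ * ‖v‖ := A.le_opNorm v
    have : |⟪A v, v⟫| ≤ ‖A‖ * ‖v‖ ^ 2 := by
      calc |⟪A v, v⟫| ≤ ‖A v‖ * ‖v‖ := h1'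
        _ ≤ ‖A‖ * ‖v‖ * ‖v‖ := by
            apply mul_le_mul_of_nonneg_right h2' (norm_nonneg _)
        _ = ‖A‖ * ‖v‖ ^ 2 := by ring
    linarith [neg_abs_le ⟪A v, v⟫]
  have key : ε₁ / ‖A‖ * ‖x‖ ^ 2 ≤ ‖v‖ ^ 2 := by
    rw [div_mul_eq_mul_div, div_le_iff₀ hAnorm]
    nlinarith
  calc Real.sqrt (ε₁ / ‖A‖) * ‖x‖
      = Real.sqrt (ε₁ / ‖A‖ * ‖x‖ ^ 2) := by
        rw [Real.sqrt_mul (le_of_lt (div_pos hε₁ hAnorm)), Real.sqrt_sq (norm_nonneg _)]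
    _ ≤ Real.sqrt (‖v‖ ^ 2) := Real.sqrt_le_sqrt key
    _ = ‖v‖ := Real.sqrt_sq (norm_nonneg _)
end

section
/- Let H be a Hilbert space, A self-adjoint with ‖(A⁺)⁻¹ restricted appropriately‖ ≤ 1/l on the positive spectral part H⁺ (i.e., (Au, u) ≥ l‖u‖² for u ∈ H⁺ ∩ D(A)), and let F ∈ C¹(H, ℝ) with F' Lipschitz of constant l_F < l. Suppose z = z⁺ + w with z⁺ ∈ H⁺ ∩ D(A) satisfying A z⁺ = P⁺ F'(z⁺ + w), where P⁺ is the orthogonal projection onto H⁺. Then (1/2)(Az, z) − F(z) − [(1/2)(Aw, w) − F(w)] ≤ −((l − l_F)/2)‖z⁺‖². -/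
open RealInnerProductSpace

theorem stmt_14 {H : Type*} [NormedAddCommGroup H] [InnerProductSpace ℝ H] [CompleteSpace H]
    (l lF : ℝ) (hlF : 0 ≤ lF) (hl : lF < l)
    (A : H →ₗ[ℝ] H) (hsym : ∀ x y : H, ⟪A x, y⟫ = ⟪x, A y⟫)
    (Hp : Submodule ℝ H) [CompleteSpace Hp]
    (hinvariant : ∀ u ∈ Hp, A u ∈ Hp)
    (hcoer : ∀ u ∈ Hp, l * ‖u‖ ^ 2 ≤ ⟪A u, u⟫)
    (F : H → ℝ) (F' : H → H) (hF : ∀ x : H, HasGradientAt F (F' x) x)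
    (hLip : LipschitzWith (Real.toNNReal lF) F')
    (zp w : H) (hzp : zp ∈ Hp) (hw : w ∈ Hpᗮ)
    (heq : A zp = (Hp.orthogonalProjectionOnto (F' (zp + w)) : H)) :
    (1 / 2) * ⟪A (zp + w), zp + w⟫ - F (zp + w) - ((1 / 2) * ⟪A w, w⟫ - F w)
      ≤ -((l - lF) / 2) * ‖zp‖ ^ 2 := by
  set z := zp + w with hz
  -- cross terms vanish
  have h1 : ⟪A zp, w⟫ = 0 := hw _ (hinvariant zp hzp)
  have h2 : ⟪A w, zp⟫ = 0 := by rw [hsym, real_inner_comm]; exact h1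
  have hAzz : ⟪A z, z⟫ = ⟪A zp, zp⟫ + ⟪A w, w⟫ := by
    simp only [hz, map_add, inner_add_left, inner_add_right, h1, h2]
    ring
  -- gradient identity
  have hgrad : ⟪A zp, zp⟫ = ⟪F' z, zp⟫ := by
    rw [heq]
    have hmem : F' z - (Hp.orthogonalProjectionOnto (F' z) : H) ∈ Hpᗮ :=
      Hp.sub_starProjection_mem_orthogonal (F' z)
    have h0 := hmem zp hzp
    rw [real_inner_comm, inner_sub_left] at h0
    linarith
  -- derivative of F along the segment
  have hg : ∀ s : ℝ, HasDerivAt (fun s : ℝ => F (w + s • zp)) ⟪F' (w + s • zp), zp⟫ s := by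
    intro s
    have hline : HasDerivAt (fun s : ℝ => w + s • zp) zp s := by
      simpa using ((hasDerivAt_id s).smul_const zp).const_add w
    have := (hF (w + s • zp)).hasFDerivAt.comp_hasDerivAt s hline
    simp at this
    exact this
  have hcont : Continuous fun s : ℝ => ⟪F' (w + s • zp), zp⟫ := by
    apply Continuous.inner
    · exact hLip.continuous.comp (by fun_prop)
    · exact continuous_const
  have hftc : F z - F w = ∫ s in (0:ℝ)..1, ⟪F' (w + s • zp), zp⟫ := by
    have := intervalIntegral.integral_eq_sub_of_hasDerivAt
      (f := fun s : ℝ => F (w + s • zp)) (fun s _ => hg s)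
      (hcont.intervalIntegrable 0 1)
    rw [this]
    norm_num [hz]
    rw [add_comm]
  -- pointwise lower bound on the integrand
  have hbound : ∀ s ∈ Set.Icc (0:ℝ) 1,
      ⟪F' z, zp⟫ - lF * ‖zp‖ ^ 2 + (lF * ‖zp‖ ^ 2) * s ≤ ⟪F' (w + s • zp), zp⟫ := by
    intro s hs
    have hdiff : ‖F' (w + s • zp) - F' z‖ ≤ lF * ((1 - s) * ‖zp‖) := by
      have := hLip.dist_le_mul (w + s • zp) z
      simp only [dist_eq_norm] at this
      have hval : (Real.toNNReal lF : ℝ) = lF := Real.coe_toNNReal lF hlF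
      rw [hval] at this
      have hnorm : ‖(w + s • zp) - z‖ = (1 - s) * ‖zp‖ := by
        have : (w + s • zp) - z = (s - 1) • zp := by
          simp [hz]; module
        rw [this, norm_smul]
        simp [abs_of_nonpos (by linarith [hs.2] : s - 1 ≤ 0)]
      rw [hnorm] at this
      exact this
    have hinner : ⟪F' (w + s • zp) - F' z, zp⟫ ≥ -(lF * ((1 - s) * ‖zp‖) * ‖zp‖) := by
      have h3 := abs_real_inner_le_norm (F' (w + s • zp) - F' z) zp
      have h4 : ‖F' (w + s • zp) - F' z‖ * ‖zp‖ ≤ lF * ((1 - s) * ‖zp‖) * ‖zp‖ :=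
        mul_le_mul_of_nonneg_right hdiff (norm_nonneg _)
      have := neg_abs_le ⟪F' (w + s • zp) - F' z, zp⟫
      linarith
    rw [inner_sub_left] at hinner
    have hring : lF * ((1 - s) * ‖zp‖) * ‖zp‖ = lF * ‖zp‖ ^ 2 - lF * ‖zp‖ ^ 2 * s := by
      ring
    linarith
  -- integrate the bound
  have hint : ⟪F' z, zp⟫ - (lF / 2) * ‖zp‖ ^ 2 ≤ ∫ s in (0:ℝ)..1, ⟪F' (w + s • zp), zp⟫ := by
    have hc1 : Continuous (fun s : ℝ => ⟪F' z, zp⟫ - lF * ‖zp‖ ^ 2 + (lF * ‖zp‖ ^ 2) * s) := by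
      fun_prop
    have hc2 : Continuous (fun _ : ℝ => ⟪F' z, zp⟫ - lF * ‖zp‖ ^ 2) := continuous_const
    have hc3 : Continuous (fun s : ℝ => (lF * ‖zp‖ ^ 2) * s) := by fun_prop
    have hub := intervalIntegral.integral_mono_on (μ := MeasureTheory.volume) (by norm_num : (0:ℝ) ≤ 1)
      (hc1.intervalIntegrable 0 1)
      (hcont.intervalIntegrable 0 1) hbound
    have hcalc : (∫ s in (0:ℝ)..1, (⟪F' z, zp⟫ - lF * ‖zp‖ ^ 2 + (lF * ‖zp‖ ^ 2) * s))
        = ⟪F' z, zp⟫ - (lF / 2) * ‖zp‖ ^ 2 := by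
      rw [intervalIntegral.integral_add (hc2.intervalIntegrable 0 1)
        (hc3.intervalIntegrable 0 1),
        intervalIntegral.integral_const, intervalIntegral.integral_const_mul, integral_id]
      norm_num; ring
    linarith [hcalc ▸ hub]
  have hc := hcoer zp hzp
  rw [hAzz]
  linarith
end
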